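/- As x → ∞, x·(α/(2(1 + x^{α/2})·log(1 + x^{−α/2})) − 1) is asymptotic to (α/2 − 1)·x; equivalently, if Λ₂*(N₁) denotes the solution of N₁ = Λ·(α/(2(1+Λ^{α/2})·log(1+Λ^{−α/2})) − 1) for 2 < α < 4, then Λ₂*(N₁)/N₁ → 2/(α−2) as N₁ → ∞. -/

import Mathlib

open Real Filter

private lemma key_lim : Tendsto (fun x : ℝ => (1 + x) * Real.log (1 + x⁻¹)) atTop (nhds 1) := by
  have h1 : Tendsto (fun x : ℝ => x * Real.log (1 + x⁻¹)) atTop (nhds 1) := by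
    simpa [one_div] using Real.tendsto_mul_log_one_add_div_atTop (1:ℝ)
  have h2 : Tendsto (fun x : ℝ => Real.log (1 + x⁻¹)) atTop (nhds 0) := by
    have ht : Tendsto (fun x : ℝ => 1 + x⁻¹) atTop (nhds (1+0)) :=
      tendsto_const_nhds.add tendsto_inv_atTop_zero
    have hc : ContinuousAt Real.log (1+0) := Real.continuousAt_log (by norm_num)
    simpa [Function.comp_def] using hc.tendsto.comp ht
  have h := h1.add h2
  rw [show (1:ℝ)+0 = 1 by ring] at h
  exact h.congr (fun x => by ring)

private lemma key_lim2 (a : ℝ) (ha : 0 < a) :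
    Tendsto (fun Λ : ℝ => (1 + Λ ^ a) * Real.log (1 + Λ ^ (-a))) atTop (nhds 1) := by
  have hr : Tendsto (fun Λ : ℝ => Λ ^ a) atTop atTop := tendsto_rpow_atTop ha
  have h := key_lim.comp hr
  apply h.congr'
  filter_upwards [eventually_gt_atTop 0] with Λ hΛ
  simp [Function.comp, Real.rpow_neg hΛ.le]

private lemma g_lim (α : ℝ) (hα : 2 < α) :
    Tendsto (fun Λ : ℝ => α / (2 * (1 + Λ ^ (α / 2)) * Real.log (1 + Λ ^ (-(α / 2)))) - 1)
      atTop (nhds (α / 2 - 1)) := by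
  have h := key_lim2 (α / 2) (by linarith)
  have hden : Tendsto (fun Λ : ℝ => 2 * (1 + Λ ^ (α / 2)) * Real.log (1 + Λ ^ (-(α / 2))))
      atTop (nhds 2) := by
    have := (tendsto_const_nhds (x := (2:ℝ)) (f := atTop)).mul h
    simpa [mul_assoc] using this
  have hdiv : Tendsto (fun Λ : ℝ => α / (2 * (1 + Λ ^ (α / 2)) * Real.log (1 + Λ ^ (-(α / 2)))))
      atTop (nhds (α / 2)) := by
    have := tendsto_const_nhds (x := α) (f := atTop (α := ℝ)) |>.div hden (by norm_num)
    exact this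
  simpa using hdiv.sub (tendsto_const_nhds (x := (1:ℝ)))

theorem asymptotic_Lambda2_star (α : ℝ) (hα : 2 < α) (hα4 : α < 4) (L : ℝ → ℝ)
    (hL : ∀ N₁ : ℝ, 0 < N₁ → 0 < L N₁ ∧
      N₁ = L N₁ * (α / (2 * (1 + (L N₁) ^ (α / 2)) * Real.log (1 + (L N₁) ^ (-(α / 2)))) - 1)) :
    (Tendsto (fun x : ℝ =>
        (x * (α / (2 * (1 + x ^ (α / 2)) * Real.log (1 + x ^ (-(α / 2)))) - 1)) / ((α / 2 - 1) * x))
      atTop (nhds 1)) ∧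
    Tendsto (fun N₁ : ℝ => L N₁ / N₁) atTop (nhds (2 / (α - 2))) := by
  have hg := g_lim α hα
  have hc : (α / 2 - 1) ≠ 0 := by intro h; nlinarith [h]
  constructor
  · have h := hg.div_const (α / 2 - 1)
    rw [div_self hc] at h
    apply h.congr'
    filter_upwards [eventually_gt_atTop 0] with x hx
    rw [mul_comm x _, mul_div_mul_right _ _ hx.ne']
  · -- L tends to atTop
    have hLtop : Tendsto L atTop atTop := by
      rw [tendsto_atTop]
      intro b
      set b' := max b 1 with hb'
      have hb'pos : (0:ℝ) < b' := lt_of_lt_of_le one_pos (le_max_right _ _)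
      have hlogpos : 0 < Real.log (1 + b' ^ (-(α / 2))) := by
        apply Real.log_pos
        have : (0:ℝ) < b' ^ (-(α / 2)) := Real.rpow_pos_of_pos hb'pos _
        linarith
      set K := α / (2 * Real.log (1 + b' ^ (-(α / 2)))) with hK
      have hKpos : 0 < K := div_pos (by linarith) (by linarith)
      filter_upwards [eventually_gt_atTop (max 0 (b' * K))] with N₁ hN₁
      have hN₁pos : 0 < N₁ := lt_of_le_of_lt (le_max_left _ _) hN₁
      obtain ⟨hLpos, hEq⟩ := hL N₁ hN₁pos
      by_contra hcon
      push_neg at hcon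
      have hLb' : L N₁ ≤ b' := le_trans hcon.le (le_max_left _ _)
      have h1 : b' ^ (-(α / 2)) ≤ (L N₁) ^ (-(α / 2)) :=
        Real.rpow_le_rpow_of_nonpos hLpos hLb' (by linarith)
      have hLpow : (0:ℝ) < (L N₁) ^ (-(α / 2)) := Real.rpow_pos_of_pos hLpos _
      have h2 : Real.log (1 + b' ^ (-(α / 2))) ≤ Real.log (1 + (L N₁) ^ (-(α / 2))) :=
        Real.log_le_log (by positivity) (by linarith)
      have h3 : (0:ℝ) ≤ (L N₁) ^ (α / 2) := Real.rpow_nonneg hLpos.le _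
      have hden_ge : 2 * Real.log (1 + b' ^ (-(α / 2))) ≤
          2 * (1 + (L N₁) ^ (α / 2)) * Real.log (1 + (L N₁) ^ (-(α / 2))) := by
        nlinarith
      have hgK : α / (2 * (1 + (L N₁) ^ (α / 2)) * Real.log (1 + (L N₁) ^ (-(α / 2)))) ≤ K := by
        exact div_le_div_of_nonneg_left (by linarith) (by linarith) hden_ge
      have hNle : N₁ ≤ b' * K := by
        calc N₁ = L N₁ * (α / (2 * (1 + (L N₁) ^ (α / 2)) *
              Real.log (1 + (L N₁) ^ (-(α / 2)))) - 1) := hEq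
          _ ≤ L N₁ * K := by nlinarith
          _ ≤ b' * K := by nlinarith
      have : b' * K < N₁ := lt_of_le_of_lt (le_max_right 0 (b' * K)) hN₁
      linarith
    have hgL : Tendsto (fun N₁ => α / (2 * (1 + (L N₁) ^ (α / 2)) *
        Real.log (1 + (L N₁) ^ (-(α / 2)))) - 1) atTop (nhds (α / 2 - 1)) := hg.comp hLtop
    have hinv := hgL.inv₀ hc
    have hval : (α / 2 - 1)⁻¹ = 2 / (α - 2) := by
      rw [inv_eq_one_div]
      rw [div_eq_div_iff hc (by intro h; nlinarith [h] : (α - 2) ≠ 0)]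
      ring
    rw [hval] at hinv
    apply hinv.congr'
    filter_upwards [eventually_gt_atTop 0] with N₁ hN₁
    obtain ⟨hLpos, hEq⟩ := hL N₁ hN₁
    have hgne : (α / (2 * (1 + (L N₁) ^ (α / 2)) *
        Real.log (1 + (L N₁) ^ (-(α / 2)))) - 1) ≠ 0 := by
      intro h0; rw [h0, mul_zero] at hEq; linarith
    rw [inv_eq_one_div, div_eq_div_iff hgne hN₁.ne', one_mul]
    linarith [hEq]
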